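/- Let X be a Banach space, m a positive integer, Γ an m × m positive definite real matrix, y ∈ ℝ^m fixed, and Φ(u) = (1/2)‖Γ^{-1/2}(𝒢(u) − y)‖₂². Suppose 𝒢 : X → ℝ^m satisfies: (a) for every ε > 0 there is M(ε) ∈ ℝ with ‖𝒢(u)‖₂ ≤ exp(ε‖u‖_X + M) for all u ∈ X; (b) for every ε > 0 there is K(ε) > 0 with ‖𝒢(u₁) − 𝒢(u₂)‖₂ ≤ K exp(ε max(‖u₁‖_X, ‖u₂‖_X))‖u₁ − u₂‖_X for all u₁, u₂ ∈ X. Let P : X → X be a bounded linear operator with ‖Pu‖_X ≤ C₀‖u‖_X for all u. Then for every ε > 0 there exists a constant C(ε) > 0 such that |Φ(u) − Φ(Pu)| ≤ C exp(ε‖u‖_X) ‖u − Pu‖_X for all u ∈ X. -/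

import Mathlib

open MeasureTheory Matrix

/-- The Euclidean norm on `ℝ^m`. -/
noncomputable def euclNorm {m : ℕ} (v : Fin m → ℝ) : ℝ :=
  Real.sqrt (∑ i, (v i) ^ 2)

/-- The weighted norm `‖v‖_Γ = ‖Γ^{-1/2} v‖₂` induced by a positive definite matrix `Γ`,
where `Γ^{-1/2}` is the inverse of the positive definite square root of `Γ`. -/
noncomputable def gammaNorm {m : ℕ} (Γ : Matrix (Fin m) (Fin m) ℝ) (hΓ : Γ.PosDef)
    (v : Fin m → ℝ) : ℝ :=
  euclNorm (((hΓ.posSemidef.1.eigenvectorUnitary : Matrix (Fin m) (Fin m) ℝ) *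
    diagonal (Real.sqrt ∘ hΓ.posSemidef.1.eigenvalues) *
    (star hΓ.posSemidef.1.eigenvectorUnitary : Matrix (Fin m) (Fin m) ℝ))⁻¹ *ᵥ v)

/-- Error estimate for the discretized Gaussian likelihood potential: if the forward map
`𝒢` is exponentially bounded and locally Lipschitz with exponential factor for every
`ε > 0`, and `P` is a bounded linear operator on `X`, then for every `ε > 0` there is
`C(ε) > 0` with `|Φ(u) − Φ(Pu)| ≤ C exp(ε‖u‖) ‖u − Pu‖` for all `u`, where
`Φ(u) = ½‖Γ^{-1/2}(𝒢(u) − y)‖₂²`. -/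
theorem discretized_potential_error
    {X : Type*} [NormedAddCommGroup X] [NormedSpace ℝ X] [CompleteSpace X]
    (m : ℕ) (hm : 0 < m)
    (Γ : Matrix (Fin m) (Fin m) ℝ) (hΓ : Γ.PosDef)
    (y : Fin m → ℝ) (G : X → Fin m → ℝ)
    (ha : ∀ ε > (0 : ℝ), ∃ M : ℝ, ∀ u : X,
      euclNorm (G u) ≤ Real.exp (ε * ‖u‖ + M))
    (hb : ∀ ε > (0 : ℝ), ∃ K > (0 : ℝ), ∀ u₁ u₂ : X,
      euclNorm (G u₁ - G u₂) ≤
        K * Real.exp (ε * max ‖u₁‖ ‖u₂‖) * ‖u₁ - u₂‖)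
    (P : X →L[ℝ] X) (C₀ : ℝ) (hP : ∀ u : X, ‖P u‖ ≤ C₀ * ‖u‖) :
    ∀ ε > (0 : ℝ), ∃ C > (0 : ℝ), ∀ u : X,
      |(1 / 2) * (gammaNorm Γ hΓ (G u - y)) ^ 2 -
        (1 / 2) * (gammaNorm Γ hΓ (G (P u) - y)) ^ 2| ≤
        C * Real.exp (ε * ‖u‖) * ‖u - P u‖ := by
  classical
  set A := ((hΓ.posSemidef.1.eigenvectorUnitary : Matrix (Fin m) (Fin m) ℝ) *
    diagonal (Real.sqrt ∘ hΓ.posSemidef.1.eigenvalues) *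
    (star hΓ.posSemidef.1.eigenvectorUnitary : Matrix (Fin m) (Fin m) ℝ))⁻¹ with hAdef
  let e : (Fin m → ℝ) ≃ₗ[ℝ] PiLp 2 (fun _ : Fin m => ℝ) :=
    (WithLp.linearEquiv 2 ℝ (Fin m → ℝ)).symm
  have hnorm : ∀ v : Fin m → ℝ, euclNorm v = ‖e v‖ := by
    intro v
    rw [EuclideanSpace.norm_eq]
    simp [euclNorm, sq_abs, e]
  let Lc : PiLp 2 (fun _ : Fin m => ℝ) →L[ℝ] PiLp 2 (fun _ : Fin m => ℝ) :=
    LinearMap.toContinuousLinearMap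
      (e.toLinearMap ∘ₗ A.mulVecLin ∘ₗ e.symm.toLinearMap)
  have hg : ∀ v : Fin m → ℝ, gammaNorm Γ hΓ v = ‖Lc (e v)‖ := by
    intro v
    simp [gammaNorm, hnorm, Lc, Matrix.mulVecLin]
    rfl
  set S := ‖Lc‖ with hSdef
  have hS0 : 0 ≤ S := norm_nonneg _
  have hLc : ∀ v : Fin m → ℝ, gammaNorm Γ hΓ v ≤ S * euclNorm v := by
    intro v
    rw [hg, hnorm]
    exact Lc.le_opNorm _
  -- triangle-type facts
  have habs : ∀ v w : Fin m → ℝ,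
      |gammaNorm Γ hΓ v - gammaNorm Γ hΓ w| ≤ gammaNorm Γ hΓ (v - w) := by
    intro v w
    rw [hg, hg, hg]
    calc |‖Lc (e v)‖ - ‖Lc (e w)‖| ≤ ‖Lc (e v) - Lc (e w)‖ := abs_norm_sub_norm_le _ _
      _ = ‖Lc (e (v - w))‖ := by rw [← map_sub, ← map_sub]
  have hsubadd : ∀ v w : Fin m → ℝ,
      euclNorm (v - w) ≤ euclNorm v + euclNorm w := by
    intro v w
    rw [hnorm, hnorm, hnorm, map_sub]
    exact norm_sub_le _ _
  intro ε hε
  set C₀' : ℝ := max C₀ 1 with hC₀'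
  have hC₀'1 : 1 ≤ C₀' := le_max_right _ _
  have hC₀'0 : 0 < C₀' := lt_of_lt_of_le one_pos hC₀'1
  set ε' : ℝ := ε / (2 * C₀') with hε'def
  have hε' : 0 < ε' := div_pos hε (by positivity)
  obtain ⟨M, hM⟩ := ha ε' hε'
  obtain ⟨K, hK0, hKb⟩ := hb ε' hε'
  set ny := euclNorm y with hny
  have hny0 : 0 ≤ ny := by rw [hny, hnorm]; exact norm_nonneg _
  refine ⟨S ^ 2 * K * (Real.exp M + ny) * 2 + 1, by positivity, ?_⟩
  intro u
  -- abbreviations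
  set x := gammaNorm Γ hΓ (G u - y) with hx
  set z := gammaNorm Γ hΓ (G (P u) - y) with hz
  have hx0 : 0 ≤ x := by rw [hx, hg]; exact norm_nonneg _
  have hz0 : 0 ≤ z := by rw [hz, hg]; exact norm_nonneg _
  have hPu : ‖P u‖ ≤ C₀' * ‖u‖ :=
    le_trans (hP u) (mul_le_mul_of_nonneg_right (le_max_left _ _) (norm_nonneg _))
  have hu : ‖u‖ ≤ C₀' * ‖u‖ := le_mul_of_one_le_left (norm_nonneg _) hC₀'1
  have hεhalf : ε' * (C₀' * ‖u‖) = ε / 2 * ‖u‖ := by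
    rw [hε'def]; field_simp
  have hexp2 : Real.exp (ε / 2 * ‖u‖) * Real.exp (ε / 2 * ‖u‖) = Real.exp (ε * ‖u‖) := by
    rw [← Real.exp_add]; ring_nf
  set E := Real.exp (ε / 2 * ‖u‖) with hE
  have hE1 : 1 ≤ E := Real.one_le_exp (by positivity)
  have hE0 : 0 < E := lt_of_lt_of_le one_pos hE1
  -- bound on the difference
  have hdiff : |x - z| ≤ S * K * E * ‖u - P u‖ := by
    calc |x - z| ≤ gammaNorm Γ hΓ ((G u - y) - (G (P u) - y)) := habs _ _
      _ = gammaNorm Γ hΓ (G u - G (P u)) := by ring_nf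
      _ ≤ S * euclNorm (G u - G (P u)) := hLc _
      _ ≤ S * (K * Real.exp (ε' * max ‖u‖ ‖P u‖) * ‖u - P u‖) := by
          apply mul_le_mul_of_nonneg_left (hKb u (P u)) hS0
      _ ≤ S * (K * E * ‖u - P u‖) := by
          apply mul_le_mul_of_nonneg_left _ hS0
          apply mul_le_mul_of_nonneg_right _ (norm_nonneg _)
          apply mul_le_mul_of_nonneg_left _ (le_of_lt hK0)
          rw [hE, ← hεhalf]
          apply Real.exp_le_exp_of_le
          exact mul_le_mul_of_nonneg_left (max_le hu hPu) (le_of_lt hε')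
      _ = S * K * E * ‖u - P u‖ := by ring
  -- bounds on x and z
  have hxb : ∀ w : X, ε' * ‖w‖ ≤ ε / 2 * ‖u‖ →
      gammaNorm Γ hΓ (G w - y) ≤ S * (Real.exp M + ny) * E := by
    intro w hw
    calc gammaNorm Γ hΓ (G w - y) ≤ S * euclNorm (G w - y) := hLc _
      _ ≤ S * (euclNorm (G w) + ny) := by
          apply mul_le_mul_of_nonneg_left (hsubadd _ _) hS0
      _ ≤ S * (Real.exp (ε' * ‖w‖ + M) + ny) := by
          apply mul_le_mul_of_nonneg_left _ hS0
          exact add_le_add_left (hM w) _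
      _ ≤ S * (Real.exp (ε / 2 * ‖u‖) * Real.exp M + ny * E) := by
          apply mul_le_mul_of_nonneg_left _ hS0
          apply add_le_add
          · rw [Real.exp_add, mul_comm (Real.exp (ε' * ‖w‖))]
            rw [mul_comm (Real.exp (ε / 2 * ‖u‖))]
            exact mul_le_mul_of_nonneg_left (Real.exp_le_exp_of_le hw) (Real.exp_pos M).le
          · exact le_mul_of_one_le_right hny0 hE1
      _ = S * (Real.exp M + ny) * E := by rw [hE]; ring
  have hwu : ε' * ‖u‖ ≤ ε / 2 * ‖u‖ := by
    rw [← hεhalf]; exact mul_le_mul_of_nonneg_left hu hε'.le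
  have hwPu : ε' * ‖P u‖ ≤ ε / 2 * ‖u‖ := by
    rw [← hεhalf]; exact mul_le_mul_of_nonneg_left hPu hε'.le
  have hxE := hxb u hwu
  have hzE := hxb (P u) hwPu
  rw [← hx] at hxE
  rw [← hz] at hzE
  -- combine
  have hq0 : 0 ≤ S * (Real.exp M + ny) * E :=
    mul_nonneg (mul_nonneg hS0 (by positivity)) hE0.le
  have hd0 : 0 ≤ S * K * E * ‖u - P u‖ :=
    mul_nonneg (mul_nonneg (mul_nonneg hS0 hK0.le) hE0.le) (norm_nonneg _)
  have hcore : |(1:ℝ) / 2 * x ^ 2 - 1 / 2 * z ^ 2| ≤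
      (S * K * E * ‖u - P u‖) * (S * (Real.exp M + ny) * E) := by
    have heq : (1:ℝ) / 2 * x ^ 2 - 1 / 2 * z ^ 2 = (x - z) * ((x + z) / 2) := by ring
    rw [heq, abs_mul, abs_of_nonneg (by linarith : (0:ℝ) ≤ (x + z) / 2)]
    exact mul_le_mul hdiff (by linarith) (by linarith) hd0
  calc |(1:ℝ) / 2 * x ^ 2 - 1 / 2 * z ^ 2| ≤
      (S * K * E * ‖u - P u‖) * (S * (Real.exp M + ny) * E) := hcore
    _ = S ^ 2 * K * (Real.exp M + ny) * (E * E) * ‖u - P u‖ := by ring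
    _ = S ^ 2 * K * (Real.exp M + ny) * Real.exp (ε * ‖u‖) * ‖u - P u‖ := by
        rw [hE, hexp2]
    _ ≤ (S ^ 2 * K * (Real.exp M + ny) * 2 + 1) * Real.exp (ε * ‖u‖) * ‖u - P u‖ := by
        apply mul_le_mul_of_nonneg_right _ (norm_nonneg _)
        apply mul_le_mul_of_nonneg_right _ (Real.exp_pos _).le
        have hq'0 : 0 ≤ S ^ 2 * K * (Real.exp M + ny) :=
          mul_nonneg (mul_nonneg (sq_nonneg S) hK0.le) (by positivity)
        linarith
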